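/- As formal power series with integer coefficients, ∑_{n≥0} b(n) q^n ≡ (q;q)_∞^{47} / ((q^2;q^2)_∞^2 (q^7;q^7)_∞^7) (mod 49), i.e., every coefficient of the difference of the two series is divisible by 49. -/

import Mathlib

/-- The formal power series `(q^d; q^d)_∞ = ∏_{m ≥ 1} (1 - q^{d·m})` over `ℤ`.
Its `n`-th coefficient is defined as the `n`-th coefficient of the finite truncated
product `∏_{m=1}^{n+1} (1 - q^{d·m})`; for `d ≥ 1` the omitted factors do not affect
the coefficient of `q^n`, so this is the usual infinite product. -/
noncomputable def pochE (d : ℕ) : PowerSeries ℤ :=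
  PowerSeries.mk fun n =>
    PowerSeries.coeff (R := ℤ) n
      (∏ m ∈ Finset.range (n + 1), (1 - (PowerSeries.X : PowerSeries ℤ) ^ (d * (m + 1))))

open PowerSeries Finset

-- product congruence
private lemma prod_sub_prod_dvd' {R : Type*} [CommRing R] (c : R) (s : Finset ℕ)
    (f g : ℕ → R) (h : ∀ i ∈ s, c ∣ f i - g i) :
    c ∣ ∏ i ∈ s, f i - ∏ i ∈ s, g i := by
  classical
  induction s using Finset.cons_induction with
  | empty => simp
  | cons a s' hx ih =>
    rw [Finset.prod_cons, Finset.prod_cons]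
    have h1 : c ∣ f a - g a := h a (Finset.mem_cons_self a s')
    have h2 : c ∣ ∏ i ∈ s', f i - ∏ i ∈ s', g i := ih fun i hi => h i (Finset.mem_cons_of_mem hi)
    have : f a * ∏ i ∈ s', f i - g a * ∏ i ∈ s', g i
        = (f a - g a) * ∏ i ∈ s', f i + g a * (∏ i ∈ s', f i - ∏ i ∈ s', g i) := by ring
    rw [this]
    exact dvd_add (h1.mul_right _) (h2.mul_left _)

private lemma l3 {R : Type*} [CommRing R] (x : R) :
    (1 - x) ^ 7 - (1 - x ^ 7) = 7 * (-x + 3*x^2 - 5*x^3 + 5*x^4 - 3*x^5 + x^6) := by ring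

private lemma l2 {R : Type*} [CommRing R] (b t : R) :
    (b + 7*t)^7 = b^7 + 49*(b^6*t + 21*b^5*t^2 + 245*b^4*t^3 + 1715*b^3*t^4
      + 7203*b^2*t^5 + 16807*b*t^6 + 16807*t^7) := by ring

private lemma coeff_prod_stable (d k N : ℕ) (hd : 1 ≤ d) (hk : k < N) :
    PowerSeries.coeff (R := ℤ) k (∏ m ∈ range N, (1 - (X : PowerSeries ℤ) ^ (d*(m+1))))
      = PowerSeries.coeff (R := ℤ) k (∏ m ∈ range (k+1), (1 - (X : PowerSeries ℤ) ^ (d*(m+1)))) := by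
  have hsplit : (∏ m ∈ range (k+1), (1 - (X : PowerSeries ℤ)^(d*(m+1)))) *
      ∏ m ∈ Ico (k+1) N, (1 - (X : PowerSeries ℤ)^(d*(m+1)))
      = ∏ m ∈ range N, (1 - (X:PowerSeries ℤ)^(d*(m+1))) :=
    Finset.prod_range_mul_prod_Ico _ hk
  have hQ : (X:PowerSeries ℤ)^(k+1) ∣
      (∏ m ∈ Ico (k+1) N, (1 - (X:PowerSeries ℤ)^(d*(m+1)))) - 1 := by
    have := prod_sub_prod_dvd' ((X:PowerSeries ℤ)^(k+1)) (Ico (k+1) N)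
      (fun m => 1 - (X:PowerSeries ℤ)^(d*(m+1))) (fun _ => 1) ?_
    · simpa using this
    · intro i hi
      have h1 : k+1 ≤ d*(i+1) := by
        have := (Finset.mem_Ico.mp hi).1
        calc k+1 ≤ i+1 := by omega
        _ = 1*(i+1) := (one_mul _).symm
        _ ≤ d*(i+1) := Nat.mul_le_mul_right _ hd
      have h2 : (X:PowerSeries ℤ)^(k+1) ∣ (X:PowerSeries ℤ)^(d*(i+1)) := pow_dvd_pow _ h1
      have : (1 - (X:PowerSeries ℤ)^(d*(i+1))) - 1 = -((X:PowerSeries ℤ)^(d*(i+1))) := by ring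
      rw [this]
      exact h2.neg_right
  obtain ⟨t, ht⟩ := hQ
  have hQ' : (∏ m ∈ Ico (k+1) N, (1 - (X:PowerSeries ℤ)^(d*(m+1))))
      = 1 + (X:PowerSeries ℤ)^(k+1) * t := by linear_combination ht
  rw [← hsplit, hQ']
  have hzero : PowerSeries.coeff (R := ℤ) k
      ((X:PowerSeries ℤ)^(k+1) * ((∏ m ∈ range (k+1), (1 - (X:PowerSeries ℤ)^(d*(m+1)))) * t)) = 0 := by
    have : (X:PowerSeries ℤ)^(k+1) ∣
        (X:PowerSeries ℤ)^(k+1) * ((∏ m ∈ range (k+1), (1 - (X:PowerSeries ℤ)^(d*(m+1)))) * t) :=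
      Dvd.intro _ rfl
    exact (PowerSeries.X_pow_dvd_iff.mp this) k (lt_add_one k)
  have heq : (∏ m ∈ range (k+1), (1 - (X:PowerSeries ℤ)^(d*(m+1)))) * (1 + (X:PowerSeries ℤ)^(k+1) * t)
      = (∏ m ∈ range (k+1), (1 - (X:PowerSeries ℤ)^(d*(m+1))))
        + (X:PowerSeries ℤ)^(k+1) * ((∏ m ∈ range (k+1), (1 - (X:PowerSeries ℤ)^(d*(m+1)))) * t) := by
    ring
  rw [heq, map_add, hzero, add_zero]

private lemma pochE_stable (d n : ℕ) (hd : 1 ≤ d) :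
    (X:PowerSeries ℤ)^(n+1) ∣
      pochE d - ∏ m ∈ range (n+1), (1 - (X:PowerSeries ℤ)^(d*(m+1))) := by
  rw [PowerSeries.X_pow_dvd_iff]
  intro k hk
  rw [map_sub]
  have h1 : PowerSeries.coeff (R := ℤ) k (pochE d)
      = PowerSeries.coeff (R := ℤ) k (∏ m ∈ range (k+1), (1 - (X:PowerSeries ℤ)^(d*(m+1)))) := by
    simp [pochE]
  rw [h1, coeff_prod_stable d k (n+1) hd hk, sub_self]

private lemma key (N : ℕ) : ∃ c : PowerSeries ℤ,
    (∏ m ∈ range N, (1 - (X:PowerSeries ℤ)^(1*(m+1))))^49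
    = (∏ m ∈ range N, (1 - (X:PowerSeries ℤ)^(7*(m+1))))^7 + 49*c := by
  set P : PowerSeries ℤ := ∏ m ∈ range N, (1 - (X:PowerSeries ℤ)^(1*(m+1))) with hP
  set Q : PowerSeries ℤ := ∏ m ∈ range N, (1 - (X:PowerSeries ℤ)^(7*(m+1))) with hQdef
  have h7 : (7:PowerSeries ℤ) ∣ P^7 - Q := by
    rw [hP, hQdef, ← Finset.prod_pow]
    apply prod_sub_prod_dvd'
    intro i _
    have hx : ((X:PowerSeries ℤ)^(1*(i+1)))^7 = (X:PowerSeries ℤ)^(7*(i+1)) := by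
      rw [← pow_mul]; ring_nf
    have := l3 ((X:PowerSeries ℤ)^(1*(i+1)))
    rw [hx] at this
    exact ⟨_, this⟩
  obtain ⟨t, ht⟩ := h7
  have hPQ : P^7 = Q + 7*t := by linear_combination ht
  refine ⟨Q^6*t + 21*Q^5*t^2 + 245*Q^4*t^3 + 1715*Q^3*t^4
      + 7203*Q^2*t^5 + 16807*Q*t^6 + 16807*t^7, ?_⟩
  calc P^49 = (P^7)^7 := by ring
  _ = (Q + 7*t)^7 := by rw [hPQ]
  _ = Q^7 + 49*(Q^6*t + 21*Q^5*t^2 + 245*Q^4*t^3 + 1715*Q^3*t^4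
      + 7203*Q^2*t^5 + 16807*Q*t^6 + 16807*t^7) := l2 Q t

private lemma constC : PowerSeries.constantCoeff (R := ℤ) ((pochE 2)^2 * (pochE 7)^7) = 1 := by
  have h : ∀ d : ℕ, 1 ≤ d → PowerSeries.constantCoeff (R := ℤ) (pochE d) = 1 := by
    intro d hd
    rw [← PowerSeries.coeff_zero_eq_constantCoeff_apply]
    have hd' : d ≠ 0 := by omega
    simp [pochE, Finset.prod_range_one, PowerSeries.coeff_X_pow, hd']
  simp [map_mul, map_pow, h 2 (by norm_num), h 7 (by norm_num)]

/-- If `b` is the cubic partition pair function, i.e. the sequence whose generating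
function is `∑ b(n) qⁿ = 1/((q;q)_∞² (q²;q²)_∞²)`, then as formal power series over ℤ,
`∑ b(n) qⁿ ≡ (q;q)_∞⁴⁷ / ((q²;q²)_∞² (q⁷;q⁷)_∞⁷) (mod 49)`: every coefficient of the
difference of the two series is divisible by 49.  (The divisor series has constant term
1, hence is invertible; its inverse is `PowerSeries.invOfUnit _ 1`.) -/
theorem cubic_partition_pair_genfun_mod_49 (b : ℕ → ℤ)
    (hb : PowerSeries.mk b * ((pochE 1) ^ 2 * (pochE 2) ^ 2) = 1) :
    ∀ n : ℕ, (49 : ℤ) ∣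
      PowerSeries.coeff (R := ℤ) n
        (PowerSeries.mk b -
          (pochE 1) ^ 47 * PowerSeries.invOfUnit ((pochE 2) ^ 2 * (pochE 7) ^ 7) 1) := by
  intro n
  set A : PowerSeries ℤ := (pochE 2)^2 * (pochE 7)^7 with hAdef
  set I : PowerSeries ℤ := PowerSeries.invOfUnit A 1 with hIdef
  have hA : A * I = 1 := PowerSeries.mul_invOfUnit A 1 (by rw [hAdef, Units.val_one]; exact constC)
  obtain ⟨c, hc⟩ := key (n+1)
  set P : PowerSeries ℤ := ∏ m ∈ range (n+1), (1 - (X:PowerSeries ℤ)^(1*(m+1))) with hPdef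
  set Q : PowerSeries ℤ := ∏ m ∈ range (n+1), (1 - (X:PowerSeries ℤ)^(7*(m+1))) with hQdef
  have hd1 : (X:PowerSeries ℤ)^(n+1) ∣ (pochE 1)^49 - P^49 :=
    dvd_trans (pochE_stable 1 n (le_refl 1)) (sub_dvd_pow_sub_pow _ _ 49)
  have hd7 : (X:PowerSeries ℤ)^(n+1) ∣ (pochE 7)^7 - Q^7 :=
    dvd_trans (pochE_stable 7 n (by norm_num)) (sub_dvd_pow_sub_pow _ _ 7)
  obtain ⟨u1, hu1⟩ := hd1
  obtain ⟨u7, hu7⟩ := hd7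
  have hd : PowerSeries.mk b - (pochE 1)^47 * I
      = PowerSeries.C (R := ℤ) 49 * (-(PowerSeries.mk b * (pochE 2)^2 * I * c))
        + (X:PowerSeries ℤ)^(n+1) * (PowerSeries.mk b * (pochE 2)^2 * I * (u7 - u1)) := by
    have hC : (PowerSeries.C (R := ℤ)) 49 = (49 : PowerSeries ℤ) := by norm_num
    rw [hC]
    linear_combination (-(PowerSeries.mk b * (pochE 2)^2 * I)) * hc
      - (PowerSeries.mk b * (pochE 2)^2 * I) * hu1
      + (PowerSeries.mk b * (pochE 2)^2 * I) * hu7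
      + (pochE 1)^47 * I * hb - PowerSeries.mk b * hA
  rw [hd, map_add]
  have hz : PowerSeries.coeff (R := ℤ) n
      ((X:PowerSeries ℤ)^(n+1) * (PowerSeries.mk b * (pochE 2)^2 * I * (u7 - u1))) = 0 :=
    (PowerSeries.X_pow_dvd_iff.mp (Dvd.intro _ rfl)) n (lt_add_one n)
  rw [hz, add_zero, PowerSeries.coeff_C_mul]
  exact Dvd.intro _ rfl
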